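/- Let E be a Hausdorff topological space and f : [0,1] → E a function admitting a continuous extension to the split interval Î (where [0,1] is embedded as {t+}). Then f is càdlàg: f is right-continuous on [0,1) and has left limits at every t ∈ (0,1], and moreover the value of the extension at t− equals the left limit lim_{s↑t} f(s). -/

import Mathlib

open Set Filter Topology

/-- Points of the split interval: pairs (t, b) with lexicographic order,
where `b = false` represents `t−` and `b = true` represents `t+`. -/
abbrev SIP := ℝ ×ₗ Bool

/-- The split interval Î = {t− : t ∈ (0,1]} ∪ {t+ : t ∈ [0,1]}. -/
def SI : Type := {p : SIP // (ofLex p).1 ∈ Set.Icc (0:ℝ) 1 ∧ ((ofLex p).1 = 0 → (ofLex p).2 = true)}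

noncomputable instance : LinearOrder SI := Subtype.instLinearOrder _
noncomputable instance : TopologicalSpace SI := Preorder.topology SI
instance : OrderTopology SI := ⟨rfl⟩

/-- The point `t+` of the split interval, for `t ∈ [0,1]`. -/
def siPlus (t : ℝ) (ht : t ∈ Set.Icc (0:ℝ) 1) : SI :=
  ⟨toLex (t, true), ht, fun _ => rfl⟩

/-- The point `t−` of the split interval, for `t ∈ (0,1]`. -/
def siMinus (t : ℝ) (ht : t ∈ Set.Ioc (0:ℝ) 1) : SI :=
  ⟨toLex (t, false), ⟨ht.1.le, ht.2⟩, fun h => absurd h ht.1.ne'⟩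
lemma SI.lt_iff (x y : SI) : x < y ↔
    (ofLex x.val).1 < (ofLex y.val).1 ∨
      ((ofLex x.val).1 = (ofLex y.val).1 ∧ (ofLex x.val).2 < (ofLex y.val).2) := by
  have : x < y ↔ x.val < y.val := Iff.rfl
  rw [this]
  exact Prod.Lex.lt_iff

/-- Clamp a real number into the split interval, as a `+` point. -/
noncomputable def clampSI (s : ℝ) : SI :=
  siPlus (Set.projIcc (0:ℝ) 1 zero_le_one s) (Set.projIcc (0:ℝ) 1 zero_le_one s).2

lemma clampSI_of_mem {s : ℝ} (hs : s ∈ Set.Icc (0:ℝ) 1) : clampSI s = siPlus s hs := by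
  have : Set.projIcc (0:ℝ) 1 zero_le_one s = ⟨s, hs⟩ := Set.projIcc_of_mem _ hs
  simp only [clampSI, this]

lemma siPlus_lt_of_lt {s : ℝ} (hs : s ∈ Set.Icc (0:ℝ) 1) (x : SI)
    (h : s < (ofLex x.val).1) : siPlus s hs < x := by
  rw [SI.lt_iff]; exact Or.inl h

lemma lt_siPlus_of_le {s : ℝ} (hs : s ∈ Set.Icc (0:ℝ) 1) (x : SI)
    (h : (ofLex x.val).1 ≤ s) (hne : x ≠ siPlus s hs) : x < siPlus s hs := by
  rw [SI.lt_iff]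
  rcases lt_or_eq_of_le h with h' | h'
  · exact Or.inl h'
  · refine Or.inr ⟨h', ?_⟩
    rcases Bool.eq_false_or_eq_true (ofLex x.val).2 with hb | hb
    · exfalso; apply hne
      apply Subtype.ext
      show x.val = toLex (s, true)
      have : ofLex x.val = (s, true) := Prod.ext h' hb
      simpa using congrArg toLex this
    · simp [hb, siPlus]

lemma tendsto_clampSI_right {t : ℝ} (ht : t ∈ Set.Ico (0:ℝ) 1) :
    Tendsto clampSI (𝓝[>] t) (𝓝 (siPlus t ⟨ht.1, ht.2.le⟩)) := by
  rw [tendsto_order]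
  constructor
  · intro a ha
    -- a < t+, so (ofLex a.val).1 ≤ t
    have hu : (ofLex a.val).1 ≤ t := by
      rcases (SI.lt_iff a _).1 ha with h | h
      · exact h.le
      · exact le_of_eq h.1
    have hev : ∀ᶠ s in 𝓝[>] t, s ∈ Set.Ioo t 1 :=
      Ioo_mem_nhdsGT_of_mem ⟨le_refl t, ht.2⟩
    filter_upwards [hev] with s hs
    have hsm : s ∈ Set.Icc (0:ℝ) 1 := ⟨(ht.1.trans hs.1.le), hs.2.le⟩
    rw [clampSI_of_mem hsm]
    rw [SI.lt_iff]
    exact Or.inl (lt_of_le_of_lt hu hs.1)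
  · intro a ha
    -- t+ < a, so t < (ofLex a.val).1
    have hu : t < (ofLex a.val).1 := by
      rcases (SI.lt_iff _ a).1 ha with h | h
      · exact h
      · exfalso
        have := h.2
        rw [Bool.lt_iff] at this
        simp [siPlus] at this
    have hev : ∀ᶠ s in 𝓝[>] t, s ∈ Set.Ioo t (min (ofLex a.val).1 1) :=
      Ioo_mem_nhdsGT_of_mem ⟨le_refl t, lt_min hu ht.2⟩
    filter_upwards [hev] with s hs
    have hsm : s ∈ Set.Icc (0:ℝ) 1 :=
      ⟨ht.1.trans hs.1.le, (hs.2.trans_le (min_le_right _ _)).le⟩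
    rw [clampSI_of_mem hsm]
    exact siPlus_lt_of_lt hsm a (hs.2.trans_le (min_le_left _ _))

lemma tendsto_clampSI_left {t : ℝ} (ht : t ∈ Set.Ioc (0:ℝ) 1) :
    Tendsto clampSI (𝓝[<] t) (𝓝 (siMinus t ht)) := by
  rw [tendsto_order]
  constructor
  · intro a ha
    -- a < t−, so (ofLex a.val).1 < t
    have hu : (ofLex a.val).1 < t := by
      rcases (SI.lt_iff a _).1 ha with h | h
      · exact h
      · exfalso
        have := h.2
        rw [Bool.lt_iff] at this
        simp [siMinus] at this
    have hev : ∀ᶠ s in 𝓝[<] t, s ∈ Set.Ioo (max (ofLex a.val).1 0) t :=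
      Ioo_mem_nhdsLT_of_mem ⟨max_lt hu ht.1, le_refl t⟩
    filter_upwards [hev] with s hs
    have hsm : s ∈ Set.Icc (0:ℝ) 1 :=
      ⟨((le_max_right _ _).trans_lt hs.1).le, hs.2.le.trans ht.2⟩
    rw [clampSI_of_mem hsm]
    rw [SI.lt_iff]
    exact Or.inl ((le_max_left _ _).trans_lt hs.1)
  · intro a ha
    -- t− < a, so t ≤ (ofLex a.val).1
    have hu : t ≤ (ofLex a.val).1 := by
      rcases (SI.lt_iff _ a).1 ha with h | h
      · exact h.le
      · exact le_of_eq (show t = (ofLex a.val).1 from h.1)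
    have hev : ∀ᶠ s in 𝓝[<] t, s ∈ Set.Ioo 0 t :=
      Ioo_mem_nhdsLT_of_mem ⟨ht.1, le_refl t⟩
    filter_upwards [hev] with s hs
    have hsm : s ∈ Set.Icc (0:ℝ) 1 := ⟨hs.1.le, hs.2.le.trans ht.2⟩
    rw [clampSI_of_mem hsm]
    exact siPlus_lt_of_lt hsm a (hs.2.trans_le hu)

/-- If `E` is Hausdorff and `f : [0,1] → E` admits a continuous extension `F` to the split
interval (with `[0,1]` embedded as the points `t+`), then `f` is càdlàg: right-continuous
on `[0,1)` with left limits at every `t ∈ (0,1]`, and the value of `F` at `t−` is the left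
limit of `f` at `t`. -/
theorem cadlag_of_continuous_splitInterval_extension {E : Type*} [TopologicalSpace E]
    [T2Space E] (F : SI → E) (hF : Continuous F) (f : ℝ → E)
    (hf : ∀ t (ht : t ∈ Set.Icc (0:ℝ) 1), f t = F (siPlus t ht)) :
    (∀ t ∈ Set.Ico (0:ℝ) 1, Tendsto f (𝓝[>] t) (𝓝 (f t))) ∧
    (∀ t (ht : t ∈ Set.Ioc (0:ℝ) 1), Tendsto f (𝓝[<] t) (𝓝 (F (siMinus t ht)))) := by
  have key : ∀ (l : Filter ℝ) (x : SI), Tendsto clampSI l (𝓝 x) →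
      (∀ᶠ s in l, s ∈ Set.Icc (0:ℝ) 1) → Tendsto f l (𝓝 (F x)) := by
    intro l x hcl hmem
    have h1 : Tendsto (F ∘ clampSI) l (𝓝 (F x)) := (hF.tendsto x).comp hcl
    refine h1.congr' ?_
    filter_upwards [hmem] with s hs
    simp only [Function.comp_apply, clampSI_of_mem hs, hf s hs]
  constructor
  · intro t ht
    have hmem : ∀ᶠ s in 𝓝[>] t, s ∈ Set.Icc (0:ℝ) 1 := by
      filter_upwards [Ioo_mem_nhdsGT_of_mem ⟨le_refl t, ht.2⟩] with s hs
      exact ⟨ht.1.trans hs.1.le, hs.2.le⟩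
    have := key _ _ (tendsto_clampSI_right ht) hmem
    rwa [hf t ⟨ht.1, ht.2.le⟩]
  · intro t ht
    have hmem : ∀ᶠ s in 𝓝[<] t, s ∈ Set.Icc (0:ℝ) 1 := by
      filter_upwards [Ioo_mem_nhdsLT_of_mem ⟨ht.1, le_refl t⟩] with s hs
      exact ⟨hs.1.le, hs.2.le.trans ht.2⟩
    exact key _ _ (tendsto_clampSI_left ht) hmem
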